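/- For every d ≥ 1, k with 0 ≤ k ≤ d, and n ≥ 0, the number of words in the alphabet {○, ①,…,ⓚ, 1,…,d} in which each of 1,…,d appears exactly once (either circled, which is only allowed for values ≤ k, or uncircled) and exactly n circles appear (empty or filled), equals d!·P_{d,k}(n). -/

import Mathlib

open Nat

/-- `P d k n = ∑_{i=0}^{k} C(k,i) · C(n+d-i, d)`. -/
def P (d k n : ℕ) : ℕ := ∑ i ∈ Finset.range (k + 1), k.choose i * (n + d - i).choose d

section StmtNineHelpers

lemma stmt9_count_eq_count {α : Type*} [BEq α] [LawfulBEq α] [DecidableEq α] (a : α)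
    (w : List α) : List.count a w = @List.count α instBEqOfDecidableEq a w := by
  induction w with
  | nil => rfl
  | cons b l ih =>
    rw [List.count_cons, @List.count_cons α instBEqOfDecidableEq _ _ _, ih]
    congr 1
    by_cases h : a = b <;> simp [h]

lemma stmt9_two_le_count {β : Type*} [DecidableEq β] {w : List β} {p q : ℕ}
    (hp : p < w.length) (hq : q < w.length) (hpq : p ≠ q) {a : β} (ha : w[p] = a)
    (hb : w[q] = a) : 2 ≤ w.count a := by
  wlog h : p < q generalizing p q
  · exact this hq hp (Ne.symm hpq) hb ha (by omega)
  have key : w.count a = (w.take q).count a + (w.drop q).count a := by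
    conv_lhs => rw [← w.take_append_drop q, List.count_append]
  have h1 : a ∈ w.take q := by
    have hlen : p < (w.take q).length := by simp [List.length_take]; omega
    have : (w.take q)[p] = a := by simpa using ha
    exact this ▸ List.getElem_mem hlen
  have h2 : a ∈ w.drop q := by
    have hlen : 0 < (w.drop q).length := by simp [List.length_drop]; omega
    have : (w.drop q)[0] = a := by simpa using hb
    exact this ▸ List.getElem_mem hlen
  have c1 := List.count_pos_iff.mpr h1
  have c2 := List.count_pos_iff.mpr h2
  omega

lemma stmt9_count_pos_iff {α : Type*} [DecidableEq α] {a : α} {w : List α} :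
    0 < w.count a ↔ a ∈ w := List.count_pos_iff

lemma stmt9_count_eq_zero {α : Type*} [DecidableEq α] {a : α} {w : List α} :
    w.count a = 0 ↔ a ∉ w := List.count_eq_zero

lemma stmt9_countP_eq_sum_count {β : Type*} [Fintype β] [DecidableEq β] (p : β → Bool)
    (w : List β) : w.countP p = ∑ a : β, if p a then w.count a else 0 := by
  induction w with
  | nil => simp
  | cons b l ih =>
    rw [List.countP_cons, ih]
    have step : ∀ a : β, (if p a then (b :: l).count a else 0)
        = (if p a then l.count a else 0) + (if a = b then (if p a then 1 else 0) else 0) := by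
      intro a
      rw [List.count_cons]
      by_cases h2 : a = b
      · subst h2; by_cases h1 : p a <;> simp [h1]
      · simp [h2, Ne.symm h2]
    rw [Finset.sum_congr rfl fun a _ => step a, Finset.sum_add_distrib,
      Finset.sum_ite_eq' Finset.univ b (fun a => if p a then 1 else 0)]
    simp

lemma stmt9_length_eq_sum_count {β : Type*} [Fintype β] [DecidableEq β] (w : List β) :
    w.length = ∑ a : β, w.count a := by
  have h := stmt9_countP_eq_sum_count (fun _ => true) w
  simp only [List.countP_true] at h
  simpa using h

lemma stmt9_count_ofFn {β : Type*} [DecidableEq β] {nn : ℕ} (g : Fin nn → β) (a : β) :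
    (List.ofFn g).count a = (Finset.univ.filter fun p => g p = a).card := by
  rw [Finset.card_filter]
  induction nn with
  | zero => simp
  | succ m ih =>
    rw [List.ofFn_succ, List.count_cons,
      show (List.ofFn fun i : Fin m => g i.succ) = List.ofFn (g ∘ Fin.succ) from rfl,
      ih (g ∘ Fin.succ), Fin.sum_univ_succ]
    simp only [Function.comp_apply, beq_iff_eq]
    rw [Nat.add_comm]
    set_option linter.unreachableTactic false in
    set_option linter.unusedTactic false in
    try (congr 1; exact if_congr eq_comm rfl rfl)

lemma stmt9_nat_card_sigma {ι : Type*} [Fintype ι] (α : ι → Type*) [∀ i, Finite (α i)] :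
    Nat.card (Σ i, α i) = ∑ i, Nat.card (α i) := by
  letI : ∀ i, Fintype (α i) := fun i => Fintype.ofFinite (α i)
  simp only [Nat.card_eq_fintype_card]
  exact Fintype.card_sigma

lemma stmt9_card_words {β : Type*} [Fintype β] [DecidableEq β] {d : ℕ} (l : Fin d → β)
    (hl : Function.Injective l) (z : β) (hz : ∀ i, l i ≠ z) (m : ℕ) :
    Nat.card {w : List β // (∀ i, w.count (l i) = 1) ∧ (∀ b ∈ w, b = z ∨ ∃ i, b = l i) ∧
      w.count z = m} = (d + m).descFactorial d := by
  classical
  let g : (Fin d ↪ Fin (d + m)) → Fin (d + m) → β :=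
    fun f p => if h : ∃ i, f i = p then l h.choose else z
  have hg_eq : ∀ (f : Fin d ↪ Fin (d + m)) (p : Fin (d + m)) (i : Fin d),
      g f p = l i ↔ p = f i := by
    intro f p i
    constructor
    · intro h
      by_cases hex : ∃ j, f j = p
      · have h' : g f p = l hex.choose := dif_pos hex
        rw [h'] at h
        rw [← hex.choose_spec, hl h]
      · have h' : g f p = z := dif_neg hex
        rw [h'] at h; exact absurd h.symm (hz i)
    · rintro rfl
      have hex : ∃ j, f j = f i := ⟨i, rfl⟩
      have h1 : g f (f i) = l hex.choose := dif_pos hex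
      rw [h1]
      exact congrArg l (f.injective hex.choose_spec)
  have hcount_l : ∀ f i, (List.ofFn (g f)).count (l i) = 1 := by
    intro f i
    rw [stmt9_count_ofFn]
    have h1 : (Finset.univ.filter fun p => g f p = l i) = {f i} := by
      ext p; simp [hg_eq f p i]
    rw [h1, Finset.card_singleton]
  have hmem : ∀ f, ∀ b ∈ List.ofFn (g f), b = z ∨ ∃ i, b = l i := by
    intro f b hb
    rw [List.mem_ofFn] at hb
    obtain ⟨p, rfl⟩ := hb
    by_cases hex : ∃ j, f j = p
    · exact Or.inr ⟨hex.choose, dif_pos hex⟩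
    · exact Or.inl (dif_neg hex)
  have hcount_z : ∀ f, (List.ofFn (g f)).count z = m := by
    intro f
    rw [stmt9_count_ofFn]
    have h1 : (Finset.univ.filter fun p => g f p = z) = Finset.univ \ Finset.univ.image f := by
      ext p
      simp only [Finset.mem_filter, Finset.mem_univ, true_and, Finset.mem_sdiff,
        Finset.mem_image]
      constructor
      · rintro h ⟨i, rfl⟩
        rw [(hg_eq f (f i) i).mpr rfl] at h
        exact hz i h
      · intro hnot
        exact dif_neg hnot
    rw [h1, Finset.card_sdiff_of_subset (Finset.subset_univ _),
      Finset.card_image_of_injective _ f.injective, Finset.card_univ, Finset.card_univ,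
      Fintype.card_fin, Fintype.card_fin]
    omega
  let F : (Fin d ↪ Fin (d + m)) →
      {w : List β // (∀ i, w.count (l i) = 1) ∧ (∀ b ∈ w, b = z ∨ ∃ i, b = l i) ∧
        w.count z = m} := fun f => ⟨List.ofFn (g f), hcount_l f, hmem f, hcount_z f⟩
  have hbij : Function.Bijective F := by
    constructor
    · intro f f' hff
      have hgg : g f = g f' := List.ofFn_injective (congrArg Subtype.val hff)
      ext i
      have h1 : g f' (f i) = l i := by rw [← hgg]; exact (hg_eq f (f i) i).mpr rfl
      exact congrArg Fin.val ((hg_eq f' (f i) i).mp h1)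
    · rintro ⟨w, h1, h2, h3⟩
      have hmem_li : ∀ i, l i ∈ w := fun i => by
        rw [← List.count_pos_iff]; rw [h1 i]; omega
      have hlen : w.length = d + m := by
        rw [stmt9_length_eq_sum_count w,
          ← Finset.add_sum_erase Finset.univ _ (Finset.mem_univ z), h3]
        have himg : Finset.univ.image l ⊆ Finset.univ.erase z := by
          intro a ha
          rw [Finset.mem_image] at ha
          obtain ⟨i, -, rfl⟩ := ha
          exact Finset.mem_erase.mpr ⟨hz i, Finset.mem_univ _⟩
        rw [← Finset.sum_subset himg (fun a _ ha => by
          rw [List.count_eq_zero]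
          intro hmem'
          rcases h2 a hmem' with rfl | ⟨i, rfl⟩
          · exact absurd (Finset.mem_erase.mp ‹_›).1 (by simp)
          · exact ha (Finset.mem_image_of_mem l (Finset.mem_univ i)))]
        rw [Finset.sum_image (fun i _ j _ h => hl h)]
        have h1' : ∀ i : Fin d, w.count (l i) = 1 := h1
        rw [Finset.sum_congr rfl fun i _ => h1' i]
        simp
        omega
      refine ⟨⟨fun i => ⟨w.idxOf (l i), hlen ▸ List.idxOf_lt_length_iff.mpr (hmem_li i)⟩,
        fun i j hij => hl ?_⟩, ?_⟩
      · have hi := List.getElem_idxOf (List.idxOf_lt_length_iff.mpr (hmem_li i))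
        have hj := List.getElem_idxOf (List.idxOf_lt_length_iff.mpr (hmem_li j))
        rw [← hi, ← hj]
        congr 1
        exact congrArg Fin.val hij
      · apply Subtype.ext
        apply List.ext_getElem (by simp [hlen, F])
        intro p hp1 hp2
        simp only [F, List.getElem_ofFn]
        set f : Fin d ↪ Fin (d + m) := ⟨fun i => ⟨w.idxOf (l i), _⟩, fun i j hij => hl (by
          have hi := List.getElem_idxOf (List.idxOf_lt_length_iff.mpr (hmem_li i))
          have hj := List.getElem_idxOf (List.idxOf_lt_length_iff.mpr (hmem_li j))
          rw [← hi, ← hj]; congr 1; exact congrArg Fin.val hij)⟩ with hf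
        by_cases hex : ∃ i, f i = (⟨p, by simpa [F] using hp1⟩ : Fin (d + m))
        · obtain ⟨i, hi⟩ := hex
          have hv : g f _ = l i := (hg_eq f _ i).mpr hi.symm
          refine hv.trans ?_
          have hidx : w.idxOf (l i) = p := congrArg Fin.val hi
          subst hidx
          exact (List.getElem_idxOf (List.idxOf_lt_length_iff.mpr (hmem_li i))).symm
        · have hvz : g f (⟨p, by simpa [F] using hp1⟩ : Fin (d + m)) = z := dif_neg hex
          refine hvz.trans ?_
          have hpin : w[p] ∈ w := List.getElem_mem hp2
          rcases h2 _ hpin with hcase | ⟨i, hcase⟩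
          · exact hcase.symm
          · exfalso
            have hidxne : w.idxOf (l i) ≠ p := by
              intro hcon
              exact hex ⟨i, Fin.ext hcon⟩
            have h2le := stmt9_two_le_count
              (p := w.idxOf (l i)) (q := p)
              (List.idxOf_lt_length_iff.mpr (hmem_li i)) hp2 hidxne
              (List.getElem_idxOf (List.idxOf_lt_length_iff.mpr (hmem_li i))) hcase
            rw [h1 i] at h2le
            omega
  rw [← Nat.card_eq_of_bijective F hbij, Nat.card_eq_fintype_card,
    Fintype.card_embedding_eq, Fintype.card_fin, Fintype.card_fin]

/-- The conditions of `stmt9`, with the `BEq` instance pinned to the one coming from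
`DecidableEq`. -/
def stmt9P (d k n : ℕ) (w : List (Option (Fin d × Bool))) : Prop :=
  (∀ i : Fin d, @List.count _ instBEqOfDecidableEq (some (i, true)) w
      + @List.count _ instBEqOfDecidableEq (some (i, false)) w = 1) ∧
  (∀ i : Fin d, some (i, true) ∈ w → (i : ℕ) < k) ∧
  w.countP (fun a => a.elim true (fun q => q.2)) = n

end StmtNineHelpers

theorem stmt9 (d k n : ℕ) (hd : 1 ≤ d) (hk : k ≤ d) :
    Nat.card {w : List (Option (Fin d × Bool)) //
        (∀ i : Fin d, w.count (some (i, true)) + w.count (some (i, false)) = 1) ∧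
        (∀ i : Fin d, some (i, true) ∈ w → (i : ℕ) < k) ∧
        w.countP (fun a => a.elim true (fun q => q.2)) = n} =
      d ! * P d k n := by
  classical
  have hstep : Nat.card {w : List (Option (Fin d × Bool)) //
        (∀ i : Fin d, w.count (some (i, true)) + w.count (some (i, false)) = 1) ∧
        (∀ i : Fin d, some (i, true) ∈ w → (i : ℕ) < k) ∧
        w.countP (fun a => a.elim true (fun q => q.2)) = n} =
      Nat.card {w : List (Option (Fin d × Bool)) // stmt9P d k n w} := by
    apply Nat.card_congr
    apply Equiv.subtypeEquivRight
    intro w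
    unfold stmt9P
    simp only [stmt9_count_eq_count]
  rw [hstep]
  have A1 : ∀ w : List (Option (Fin d × Bool)),
      w.countP (fun a => a.elim true (fun q => q.2)) =
      @List.count _ instBEqOfDecidableEq (none : Option (Fin d × Bool)) w
        + ∑ i : Fin d, @List.count _ instBEqOfDecidableEq (some (i, true)) w := by
    intro w
    rw [stmt9_countP_eq_sum_count _ w, Fintype.sum_option]
    congr 1
    rw [Fintype.sum_prod_type]
    apply Finset.sum_congr rfl
    intro i _
    rw [Fintype.sum_bool]
    simp
  have A2 : ∀ w : List (Option (Fin d × Bool)), w.length =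
      @List.count _ instBEqOfDecidableEq (none : Option (Fin d × Bool)) w
        + ∑ i : Fin d, (@List.count _ instBEqOfDecidableEq (some (i, true)) w
            + @List.count _ instBEqOfDecidableEq (some (i, false)) w) := by
    intro w
    rw [stmt9_length_eq_sum_count w, Fintype.sum_option, Fintype.sum_prod_type]
    congr 1
    all_goals
      first
      | rfl
      | (apply Finset.sum_congr rfl
         intro i _
         rw [Fintype.sum_bool])
  haveI hfin : Finite {w : List (Option (Fin d × Bool)) // stmt9P d k n w} := by
    haveI := (List.finite_length_le (Option (Fin d × Bool)) (n + d)).to_subtype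
    refine Finite.of_injective
      (fun w => (⟨w.1, ?_⟩ : {l : List (Option (Fin d × Bool)) | l.length ≤ n + d})) ?_
    · obtain ⟨h1, h2, h3⟩ := w.2
      have e1 := A1 w.1
      have e2 := A2 w.1
      rw [h3] at e1
      rw [Finset.sum_congr rfl fun i _ => h1 i, Finset.sum_const, Finset.card_univ,
        Fintype.card_fin, smul_eq_mul, mul_one] at e2
      show (w.1).length ≤ n + d
      omega
    · intro w w' h
      exact Subtype.ext (congrArg
        (fun x : {l : List (Option (Fin d × Bool)) | l.length ≤ n + d} => x.1) h)
  set kset : Finset (Fin d) := Finset.univ.filter (fun i : Fin d => (i : ℕ) < k) with hkset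
  have hksetcard : kset.card = k := by
    have h1 : kset = Finset.map (Fin.castLEEmb hk) Finset.univ := by
      ext i
      simp only [hkset, Finset.mem_filter, Finset.mem_univ, true_and, Finset.mem_map,
        Fin.castLEEmb_apply]
      constructor
      · intro hik
        exact ⟨⟨(i : ℕ), hik⟩, Fin.ext rfl⟩
      · rintro ⟨j, rfl⟩
        simpa using j.isLt
    rw [h1, Finset.card_map, Finset.card_univ, Fintype.card_fin]
  have key : ∀ S : Finset (Fin d),
      Nat.card {w : List (Option (Fin d × Bool)) // stmt9P d k n w ∧
        (Finset.univ.filter fun i => some (i, true) ∈ w) = S} =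
      if S ⊆ kset then (n + d - S.card).descFactorial d else 0 := by
    intro S
    by_cases hSk : S ⊆ kset
    · rw [if_pos hSk]
      set lt : Fin d → Option (Fin d × Bool) := fun i => some (i, decide (i ∈ S)) with hlt
      have hlinj : Function.Injective lt := by
        intro i j hij
        simp only [hlt, Option.some.injEq, Prod.mk.injEq] at hij
        exact hij.1
      have hlz : ∀ i, lt i ≠ none := fun i => by simp [hlt]
      by_cases hSn : S.card ≤ n
      · have hiff : ∀ w : List (Option (Fin d × Bool)),
            (stmt9P d k n w ∧ (Finset.univ.filter fun i => some (i, true) ∈ w) = S) ↔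
            ((∀ i, @List.count _ instBEqOfDecidableEq (lt i) w = 1) ∧
             (∀ b ∈ w, b = (none : Option (Fin d × Bool)) ∨ ∃ i, b = lt i) ∧
             @List.count _ instBEqOfDecidableEq (none : Option (Fin d × Bool)) w
               = n - S.card) := by
          intro w
          constructor
          · rintro ⟨⟨h1, h2, h3⟩, hS⟩
            have hmem_iff : ∀ i : Fin d, some (i, true) ∈ w ↔ i ∈ S := by
              intro i
              rw [← hS, Finset.mem_filter]
              simp
            have hct : ∀ i : Fin d, @List.count _ instBEqOfDecidableEq (some (i, true)) w
                = if i ∈ S then 1 else 0 := by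
              intro i
              have h1i := h1 i
              by_cases hi : i ∈ S
              · have hpos : 0 < @List.count _ instBEqOfDecidableEq (some (i, true)) w :=
                  stmt9_count_pos_iff.mpr ((hmem_iff i).mpr hi)
                rw [if_pos hi]
                omega
              · rw [if_neg hi]
                exact stmt9_count_eq_zero.mpr (fun hmm => hi ((hmem_iff i).mp hmm))
            have hcf : ∀ i : Fin d, @List.count _ instBEqOfDecidableEq (some (i, false)) w
                = if i ∈ S then 0 else 1 := by
              intro i
              have h1i := h1 i
              have hcti := hct i
              by_cases hi : i ∈ S
              · rw [if_pos hi] at hcti ⊢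
                omega
              · rw [if_neg hi] at hcti ⊢
                omega
            refine ⟨?_, ?_, ?_⟩
            · intro i
              by_cases hi : i ∈ S
              · have hli : lt i = some (i, true) := by simp [hlt, hi]
                rw [hli, hct i, if_pos hi]
              · have hli : lt i = some (i, false) := by simp [hlt, hi]
                rw [hli, hcf i, if_neg hi]
            · intro b hb
              match b with
              | none => exact Or.inl rfl
              | some (i, bb) =>
                refine Or.inr ⟨i, ?_⟩
                cases bb
                · have hpos : 0 < @List.count _ instBEqOfDecidableEq (some (i, false)) w :=
                    stmt9_count_pos_iff.mpr hb
                  rw [hcf i] at hpos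
                  by_cases hi : i ∈ S
                  · rw [if_pos hi] at hpos
                    omega
                  · simp [hlt, hi]
                · have hi := (hmem_iff i).mp hb
                  simp [hlt, hi]
            · have e1 := A1 w
              rw [h3] at e1
              have hsum : ∑ i : Fin d, @List.count _ instBEqOfDecidableEq (some (i, true)) w
                  = S.card := by
                rw [Finset.sum_congr rfl fun i _ => hct i, Finset.sum_ite_mem,
                  Finset.univ_inter, Finset.sum_const, smul_eq_mul, mul_one]
              omega
          · rintro ⟨c1, c2, c3⟩
            have hnotmem : ∀ (i : Fin d) (bb : Bool), bb ≠ decide (i ∈ S) →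
                some (i, bb) ∉ w := by
              intro i bb hbb hmm
              rcases c2 _ hmm with h | ⟨j, hj⟩
              · exact absurd h (by simp)
              · simp only [hlt, Option.some.injEq, Prod.mk.injEq] at hj
                obtain ⟨rfl, hj2⟩ := hj
                exact hbb hj2
            have hct : ∀ i : Fin d, @List.count _ instBEqOfDecidableEq (some (i, true)) w
                = if i ∈ S then 1 else 0 := by
              intro i
              by_cases hi : i ∈ S
              · have hli : lt i = some (i, true) := by simp [hlt, hi]
                rw [if_pos hi, ← hli]
                exact c1 i
              · rw [if_neg hi]
                exact stmt9_count_eq_zero.mpr (hnotmem i true (by simp [hi]))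
            have hcf : ∀ i : Fin d, @List.count _ instBEqOfDecidableEq (some (i, false)) w
                = if i ∈ S then 0 else 1 := by
              intro i
              by_cases hi : i ∈ S
              · rw [if_pos hi]
                exact stmt9_count_eq_zero.mpr (hnotmem i false (by simp [hi]))
              · have hli : lt i = some (i, false) := by simp [hlt, hi]
                rw [if_neg hi, ← hli]
                exact c1 i
            have hsum : ∑ i : Fin d, @List.count _ instBEqOfDecidableEq (some (i, true)) w
                = S.card := by
              rw [Finset.sum_congr rfl fun i _ => hct i, Finset.sum_ite_mem,
                Finset.univ_inter, Finset.sum_const, smul_eq_mul, mul_one]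
            refine ⟨⟨?_, ?_, ?_⟩, ?_⟩
            · intro i
              by_cases hi : i ∈ S
              · rw [hct i, hcf i, if_pos hi, if_pos hi]
              · rw [hct i, hcf i, if_neg hi, if_neg hi]
            · intro i hmm
              have hpos : 0 < @List.count _ instBEqOfDecidableEq (some (i, true)) w :=
                stmt9_count_pos_iff.mpr hmm
              rw [hct i] at hpos
              by_cases hi : i ∈ S
              · have hik := hSk hi
                rw [hkset, Finset.mem_filter] at hik
                exact hik.2
              · rw [if_neg hi] at hpos
                omega
            · rw [A1 w, c3, hsum]
              omega
            · apply Finset.ext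
              intro i
              rw [Finset.mem_filter]
              constructor
              · rintro ⟨-, hmm⟩
                have hpos : 0 < @List.count _ instBEqOfDecidableEq (some (i, true)) w :=
                  stmt9_count_pos_iff.mpr hmm
                rw [hct i] at hpos
                by_cases hi : i ∈ S
                · exact hi
                · rw [if_neg hi] at hpos
                  omega
              · intro hi
                refine ⟨Finset.mem_univ i, ?_⟩
                apply stmt9_count_pos_iff.mp
                rw [hct i, if_pos hi]
                omega
        rw [Nat.card_congr (Equiv.subtypeEquivRight hiff),
          stmt9_card_words lt hlinj none hlz (n - S.card)]
        congr 1
        omega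
      · have hcardle : S.card ≤ d := by
          calc S.card ≤ kset.card := Finset.card_le_card hSk
          _ = k := hksetcard
          _ ≤ d := hk
        rw [Nat.descFactorial_eq_zero_iff_lt.mpr (by omega)]
        haveI : IsEmpty {w : List (Option (Fin d × Bool)) // stmt9P d k n w ∧
            (Finset.univ.filter fun i => some (i, true) ∈ w) = S} := by
          constructor
          rintro ⟨w, ⟨h1, h2, h3⟩, hS⟩
          have e1 := A1 w
          rw [h3] at e1
          have hge : S.card ≤ ∑ i : Fin d, @List.count _ instBEqOfDecidableEq (some (i, true)) w := by
            calc S.card = ∑ _i ∈ S, 1 := by simp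
            _ ≤ ∑ i ∈ S, @List.count _ instBEqOfDecidableEq (some (i, true)) w := by
                apply Finset.sum_le_sum
                intro i hi
                have hmm : some (i, true) ∈ w := by
                  rw [← hS, Finset.mem_filter] at hi
                  exact hi.2
                have hpos : 0 < @List.count _ instBEqOfDecidableEq (some (i, true)) w :=
                  stmt9_count_pos_iff.mpr hmm
                omega
            _ ≤ ∑ i : Fin d, @List.count _ instBEqOfDecidableEq (some (i, true)) w :=
                Finset.sum_le_sum_of_subset (Finset.subset_univ S)
          omega
        exact Nat.card_of_isEmpty
    · rw [if_neg hSk]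
      haveI : IsEmpty {w : List (Option (Fin d × Bool)) // stmt9P d k n w ∧
          (Finset.univ.filter fun i => some (i, true) ∈ w) = S} := by
        constructor
        rintro ⟨w, ⟨h1, h2, h3⟩, hS⟩
        obtain ⟨i, hiS, hik⟩ := Finset.not_subset.mp hSk
        have hmm : some (i, true) ∈ w := by
          rw [← hS, Finset.mem_filter] at hiS
          exact hiS.2
        apply hik
        rw [hkset, Finset.mem_filter]
        exact ⟨Finset.mem_univ i, h2 i hmm⟩
      exact Nat.card_of_isEmpty
  have hcard1 : Nat.card {w : List (Option (Fin d × Bool)) // stmt9P d k n w} =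
      ∑ S : Finset (Fin d), Nat.card {w : List (Option (Fin d × Bool)) // stmt9P d k n w ∧
        (Finset.univ.filter fun i => some (i, true) ∈ w) = S} := by
    rw [← Nat.card_congr (Equiv.sigmaFiberEquiv
      (fun w : {w : List (Option (Fin d × Bool)) // stmt9P d k n w} =>
        Finset.univ.filter fun i => some (i, true) ∈ w.1)),
      stmt9_nat_card_sigma]
    apply Finset.sum_congr rfl
    intro S _
    exact Nat.card_congr (Equiv.subtypeSubtypeEquivSubtypeInter (stmt9P d k n)
      (fun w => (Finset.univ.filter fun i => some (i, true) ∈ w) = S))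
  rw [hcard1, Finset.sum_congr rfl fun S _ => key S, ← Finset.sum_filter]
  have hps : Finset.univ.filter (fun S : Finset (Fin d) => S ⊆ kset) = kset.powerset := by
    ext S
    simp [Finset.mem_powerset]
  rw [hps]
  rw [show (fun S : Finset (Fin d) => (n + d - S.card).descFactorial d) =
    (fun S : Finset (Fin d) => (fun j => (n + d - j).descFactorial d) S.card) from rfl]
  rw [Finset.sum_powerset_apply_card (fun j => (n + d - j).descFactorial d), hksetcard]
  unfold P
  rw [Finset.mul_sum]
  apply Finset.sum_congr rfl
  intro j _
  rw [smul_eq_mul, Nat.descFactorial_eq_factorial_mul_choose]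
  ring
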